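/- Let k be a natural number, G = (ℤ/2ℤ)^k, A = F₂[G] its group algebra over F₂, and I ⊆ A the augmentation ideal. Then I^k is the one-dimensional F₂-subspace of A spanned by the sum Σ_{g ∈ G} g of all elements of G; in particular I^k ≠ 0. -/

import Mathlib

/-!
Setting: `Gk k = (ℤ/2ℤ)^k` written multiplicatively; `Ak k = F₂[Gk k]` its group algebra over
`F₂ = ZMod 2`; `aug` the augmentation homomorphism and `augI` the augmentation ideal.
-/

noncomputable section

/-- The elementary abelian 2-group `(ℤ/2ℤ)^k`, written multiplicatively. -/
abbrev Gk (k : ℕ) := Multiplicative (Fin k → ZMod 2)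

/-- The group algebra `F₂[(ℤ/2ℤ)^k]`. -/
abbrev Ak (k : ℕ) := MonoidAlgebra (ZMod 2) (Gk k)

/-- The augmentation homomorphism `ε : F₂[G] → F₂`, `ε(∑ a_g · g) = ∑ a_g`. -/
def aug (k : ℕ) : Ak k →ₐ[ZMod 2] ZMod 2 :=
  MonoidAlgebra.lift (ZMod 2) (ZMod 2) (Gk k) 1

/-- The augmentation ideal `I = ker ε`. -/
def augI (k : ℕ) : Ideal (Ak k) := RingHom.ker (aug k).toRingHom

open Pointwise

variable {k : ℕ}

lemma aug_single (g : Gk k) (r : ZMod 2) : aug k (MonoidAlgebra.single g r) = r := by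
  simp [aug, MonoidAlgebra.lift_single]

instance : CharP (Ak k) 2 :=
  charP_of_injective_algebraMap (algebraMap (ZMod 2) (Ak k)).injective 2



/-- generators -/
def gen (k : ℕ) (i : Fin k) : Gk k := Multiplicative.ofAdd (Pi.single i 1)

def xg (k : ℕ) (i : Fin k) : Ak k := MonoidAlgebra.single (gen k i) 1 + 1

def σa (k : ℕ) : Ak k := ∑ g : Gk k, MonoidAlgebra.single g (1 : ZMod 2)

lemma gen_sq (i : Fin k) : gen k i * gen k i = 1 := by
  show Multiplicative.ofAdd _ * Multiplicative.ofAdd _ = _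
  rw [← ofAdd_add]
  convert ofAdd_zero
  ext j
  simp [Pi.single_apply]
  split <;> decide

lemma single_mul_single (g h : Gk k) :
    MonoidAlgebra.single g (1:ZMod 2) * MonoidAlgebra.single h 1 = MonoidAlgebra.single (g*h) 1 := by
  rw [MonoidAlgebra.single_mul_single, one_mul]

lemma xg_sq (i : Fin k) : xg k i * xg k i = 0 := by
  have h1 : MonoidAlgebra.single (gen k i) (1:ZMod 2) * MonoidAlgebra.single (gen k i) 1 = 1 := by
    rw [single_mul_single, gen_sq]; rfl
  have h2 : (2 : Ak k) = 0 := by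
    have := CharP.cast_eq_zero (Ak k) 2; exact_mod_cast this
  unfold xg
  linear_combination h1 + h2 + MonoidAlgebra.single (gen k i) (1:ZMod 2) * h2

lemma prod_gen (t : Finset (Fin k)) :
    ∏ i ∈ t, gen k i = Multiplicative.ofAdd (fun j => if j ∈ t then 1 else 0) := by
  have : ∏ i ∈ t, gen k i = Multiplicative.ofAdd (∑ i ∈ t, Pi.single i (1 : ZMod 2)) := by
    simp [gen]
  rw [this]
  congr 1
  ext j
  rw [Finset.sum_apply]
  simp only [Pi.single_apply]
  split <;> rename_i h
  · rw [Finset.sum_eq_single j]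
    · simp
    · intro b _ hb
      have : ¬ j = b := fun hj => hb hj.symm
      simp [this]
    · intro hj; exact absurd h hj
  · refine Finset.sum_eq_zero ?_
    intro i hi
    have : ¬ j = i := fun hj => h (hj ▸ hi)
    simp [this]

lemma prod_xg : ∏ i : Fin k, xg k i = σa k := by
  unfold xg σa
  rw [Finset.prod_add]
  simp only [Finset.prod_const_one, mul_one]
  have hof : ∀ t : Finset (Fin k), ∏ i ∈ t, MonoidAlgebra.single (gen k i) (1:ZMod 2)
      = MonoidAlgebra.single (∏ i ∈ t, gen k i) 1 := by
    intro t
    induction t using Finset.induction with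
    | empty => simp [MonoidAlgebra.one_def]
    | @insert a s h ih => rw [Finset.prod_insert h, Finset.prod_insert h, ih,
        single_mul_single]
  refine Finset.sum_nbij' (fun t => Multiplicative.ofAdd (fun j => if j ∈ t then 1 else 0))
    (fun g => Finset.univ.filter (fun j => g.toAdd j = 1)) ?_ ?_ ?_ ?_ ?_
  · intros; simp
  · intros; simp
  · intro t _
    ext j
    simp only [Finset.mem_filter, Finset.mem_univ, true_and]
    constructor
    · intro h; by_contra hj; simp [hj] at h
    · intro h; simp [h]
  · intro g _
    apply Multiplicative.toAdd.injective
    ext j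
    show (if _ then _ else _) = _
    have hz : ∀ z : ZMod 2, z = 0 ∨ z = 1 := by decide
    have : g.toAdd j = 0 ∨ g.toAdd j = 1 := hz _
    rcases this with h | h <;> simp [h]
  · intro t _
    rw [hof, prod_gen]

lemma single_mul_σ (g : Gk k) : MonoidAlgebra.single g (1:ZMod 2) * σa k = σa k := by
  unfold σa
  rw [Finset.mul_sum]
  simp only [single_mul_single]
  exact Fintype.sum_bijective (g * ·) (Group.mulLeft_bijective g) _ _ (fun h => rfl)

lemma mul_σ (c : Ak k) : c * σa k = aug k c • σa k := by
  induction c using MonoidAlgebra.induction_on with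
  | of g =>
      rw [show (MonoidAlgebra.of (ZMod 2) (Gk k)) g = MonoidAlgebra.single g 1 from rfl,
        single_mul_σ, aug_single, one_smul]
  | add f g hf hg => rw [add_mul, hf, hg, map_add, add_smul]
  | smul r f hf => rw [smul_mul_assoc, hf, map_smul, smul_assoc]

lemma σ_ne_zero : σa k ≠ 0 := by
  intro h
  have : (σa k).coeff 1 = 1 := by
    unfold σa
    rw [MonoidAlgebra.coeff_sum, Finsupp.finset_sum_apply]
    rw [Finset.sum_eq_single (1 : Gk k)]
    · simp [MonoidAlgebra.coeff_single]
    · intro b _ hb; simp [MonoidAlgebra.coeff_single, Finsupp.single_apply, hb]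
    · simp
  rw [h] at this
  simp at this

lemma mem_augI {a : Ak k} : a ∈ augI k ↔ aug k a = 0 := Iff.rfl

lemma xg_mem_augI (i : Fin k) : xg k i ∈ augI k := by
  rw [mem_augI]
  unfold xg
  rw [map_add, aug_single, map_one]
  decide

lemma two_eq_zero : (2 : Ak k) = 0 := by
  have := CharP.cast_eq_zero (Ak k) 2; exact_mod_cast this

lemma single_add_one_mem (g : Gk k) :
    MonoidAlgebra.single g (1:ZMod 2) + 1 ∈ Ideal.span (Set.range (xg k)) := by
  -- write g as a product of generators
  obtain ⟨t, rfl⟩ : ∃ t : Finset (Fin k), ∏ i ∈ t, gen k i = g := by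
    refine ⟨Finset.univ.filter (fun j => g.toAdd j = 1), ?_⟩
    rw [prod_gen]
    apply Multiplicative.toAdd.injective
    ext j
    show (if _ then _ else _) = _
    have hz : ∀ z : ZMod 2, z = 0 ∨ z = 1 := by decide
    rcases hz (g.toAdd j) with h | h <;> simp [h]
  induction t using Finset.induction with
  | empty =>
      have : MonoidAlgebra.single (∏ i ∈ (∅ : Finset (Fin k)), gen k i) (1:ZMod 2) + 1 = 0 := by
        rw [Finset.prod_empty, show MonoidAlgebra.single (1 : Gk k) (1:ZMod 2) = 1 from rfl,
          one_add_one_eq_two, two_eq_zero]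
      rw [this]
      exact Submodule.zero_mem _
  | @insert a s h ih =>
      rw [Finset.prod_insert h, ← single_mul_single]
      have key : MonoidAlgebra.single (gen k a) (1:ZMod 2) *
            MonoidAlgebra.single (∏ i ∈ s, gen k i) (1:ZMod 2) + 1 =
          xg k a * (MonoidAlgebra.single (∏ i ∈ s, gen k i) (1:ZMod 2) + 1) - xg k a
            - (MonoidAlgebra.single (∏ i ∈ s, gen k i) (1:ZMod 2) + 1)
            + (1+1) := by
        unfold xg; ring
      rw [key, one_add_one_eq_two, two_eq_zero, add_zero]
      refine Submodule.sub_mem _ (Submodule.sub_mem _ ?_ ?_) ih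
      · exact Ideal.mul_mem_right _ _ (Ideal.subset_span ⟨a, rfl⟩)
      · exact Ideal.subset_span ⟨a, rfl⟩

lemma augI_eq_span : augI k = Ideal.span (Set.range (xg k)) := by
  apply le_antisymm
  · intro a ha
    rw [mem_augI] at ha
    have hrepr : a = ∑ g ∈ a.coeff.support, (a.coeff g) • (MonoidAlgebra.single g (1:ZMod 2) + 1) := by
      have h1 : ∑ g ∈ a.coeff.support, (a.coeff g) • (MonoidAlgebra.single g (1:ZMod 2) + 1)
          = (∑ g ∈ a.coeff.support, MonoidAlgebra.single g (a.coeff g))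
            + (∑ g ∈ a.coeff.support, a.coeff g) • (1 : Ak k) := by
        simp only [smul_add]
        rw [Finset.sum_add_distrib, Finset.sum_smul]
        congr 1
        refine Finset.sum_congr rfl (fun g _ => ?_)
        rw [MonoidAlgebra.smul_single', mul_one]
      have h2 : a = ∑ g ∈ a.coeff.support, MonoidAlgebra.single g (a.coeff g) :=
        (MonoidAlgebra.sum_coeff_single a).symm
      have h3 : aug k a = ∑ g ∈ a.coeff.support, a.coeff g := by
        conv_lhs => rw [h2]
        rw [map_sum]
        exact Finset.sum_congr rfl (fun g _ => aug_single g (a.coeff g))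
      rw [h1, ← h3, ha, zero_smul, add_zero, ← h2]
    rw [hrepr]
    exact Submodule.sum_mem _ (fun g _ =>
      Submodule.smul_of_tower_mem _ _ (single_add_one_mem g))
  · rw [Ideal.span_le]
    rintro _ ⟨i, rfl⟩
    exact xg_mem_augI i

lemma σ_mem_pow : σa k ∈ augI k ^ k := by
  rw [← prod_xg]
  have h : augI k ^ k = ∏ _i : Fin k, augI k := by
    rw [Finset.prod_const, Finset.card_univ, Fintype.card_fin]
  rw [h]
  exact Ideal.prod_mem_prod (fun i _ => xg_mem_augI i)

lemma pow_le_span : augI k ^ k ≤ Ideal.span {σa k} := by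
  rw [augI_eq_span,
    show (Ideal.span (Set.range (xg k)))^k = Ideal.span (Set.range (xg k)^k) from
      Submodule.span_pow _ k, Ideal.span_le]
  intro a ha
  rw [Set.mem_pow] at ha
  obtain ⟨f, hf⟩ := ha
  choose c hc using fun i => (f i).2
  rw [List.prod_ofFn] at hf
  have hf' : ∏ i, xg k (c i) = a := by
    rw [← hf]; exact Finset.prod_congr rfl (fun i _ => hc i)
  by_cases hinj : Function.Injective c
  · have hbij := Finite.injective_iff_bijective.mp hinj
    have : ∏ i, xg k (c i) = ∏ j, xg k j :=
      Fintype.prod_bijective c hbij _ _ (fun i => rfl)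
    rw [this, prod_xg] at hf'
    rw [← hf']
    exact Ideal.subset_span rfl
  · rw [Function.Injective] at hinj
    push_neg at hinj
    obtain ⟨i, j, hij, hne⟩ := hinj
    have hj : j ∈ Finset.univ.erase i := Finset.mem_erase.mpr ⟨fun h => hne h.symm, Finset.mem_univ j⟩
    have : ∏ l, xg k (c l) = xg k (c i) * (xg k (c j) *
        ∏ l ∈ (Finset.univ.erase i).erase j, xg k (c l)) :=
      (Finset.mul_prod_erase _ _ (Finset.mem_univ i)).symm.trans
        (congrArg (xg k (c i) * ·) (Finset.mul_prod_erase _ _ hj).symm)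
    rw [this, ← mul_assoc, hij, xg_sq, zero_mul] at hf'
    rw [← hf']
    exact Submodule.zero_mem _

/-- `I^k` is the one-dimensional `F₂`-subspace of `A` spanned by `∑_{g ∈ G} g`;
in particular `I^k ≠ 0`. -/
theorem pow_augI_eq_span_sum_univ (k : ℕ) :
    (augI k ^ k).restrictScalars (ZMod 2) =
      Submodule.span (ZMod 2) {∑ g : Gk k, MonoidAlgebra.single g (1 : ZMod 2)} ∧
    augI k ^ k ≠ ⊥ := by
  constructor
  · apply le_antisymm
    · intro a ha
      rw [Submodule.restrictScalars_mem] at ha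
      have h := pow_le_span ha
      rw [Ideal.mem_span_singleton'] at h
      obtain ⟨c, rfl⟩ := h
      rw [mul_σ]
      exact Submodule.smul_mem _ _ (Submodule.mem_span_singleton_self _)
    · rw [Submodule.span_le]
      intro x hx
      rw [Set.mem_singleton_iff] at hx
      subst hx
      exact σ_mem_pow
  · intro h
    have := σ_mem_pow (k := k)
    rw [h, Ideal.mem_bot] at this
    exact σ_ne_zero this

end
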